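/- With the same setting, the variance of m̂ = ∫_0^∞ (1 - 1/N)^{M_x} dx equals 2 ∫_0^∞ ∫_0^x p_x p_{x'}^{1 - 1/N} dx' dx − (E[X])^2, using the independence of increments M_x − M_{x'} and M_{x'} for x > x'. -/

import Mathlib

open MeasureTheory ProbabilityTheory Set
open scoped ENNReal

lemma poisson_tsum (c s : ℝ) (hc : 0 ≤ c) (hs : 0 ≤ s) :
    ∑' k : ℕ, ENNReal.ofReal (Real.exp (-c) * c ^ k / (Nat.factorial k) * s ^ k)
      = ENNReal.ofReal (Real.exp (c * s - c)) := by
  have hterm : ∀ k : ℕ, Real.exp (-c) * c ^ k / (Nat.factorial k) * s ^ k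
      = Real.exp (-c) * ((c * s) ^ k / (Nat.factorial k)) := by
    intro k; rw [mul_pow]; ring
  have hsum : Summable (fun k : ℕ => Real.exp (-c) * ((c * s) ^ k / (Nat.factorial k))) :=
    (Real.summable_pow_div_factorial (c * s)).mul_left _
  rw [← ENNReal.ofReal_tsum_of_nonneg]
  · congr 1
    calc ∑' k : ℕ, Real.exp (-c) * c ^ k / (Nat.factorial k) * s ^ k
        = ∑' k : ℕ, Real.exp (-c) * ((c * s) ^ k / (Nat.factorial k)) := tsum_congr hterm
      _ = Real.exp (-c) * ∑' k : ℕ, ((c * s) ^ k / (Nat.factorial k)) := tsum_mul_left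
      _ = Real.exp (-c) * Real.exp (c * s) := by
          rw [Real.exp_eq_exp_ℝ, NormedSpace.exp_eq_tsum_div]
      _ = Real.exp (c * s - c) := by rw [← Real.exp_add]; ring_nf
  · intro k
    positivity
  · exact (summable_congr hterm).mpr hsum

lemma poisson_tsum_one (c : ℝ) (hc : 0 ≤ c) :
    ∑' k : ℕ, ENNReal.ofReal (Real.exp (-c) * c ^ k / (Nat.factorial k)) = 1 := by
  have h := poisson_tsum c 1 hc zero_le_one
  simp only [one_pow, mul_one] at h
  simpa using h

lemma key_expect {Ω : Type*} [MeasureSpace Ω] [IsProbabilityMeasure (ℙ : Measure Ω)]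
    (p : ℝ → ℝ) (hp1 : ∀ x, p x ≤ 1)
    (N : ℕ) (hN : 2 ≤ N)
    (M : ℝ → Ω → ℕ) (hM : Measurable (fun q : ℝ × Ω => M q.1 q.2))
    (hlaw : ∀ x' x : ℝ, 0 < x' → x' < x → 0 < p x → ∀ k l : ℕ,
      ℙ {ω | M x' ω = k ∧ M x ω = k + l} =
        ENNReal.ofReal (Real.exp ((N:ℝ) * Real.log (p x'))
            * (-((N:ℝ) * Real.log (p x'))) ^ k / (Nat.factorial k))
        * ENNReal.ofReal (Real.exp ((N:ℝ) * Real.log (p x / p x'))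
            * (-((N:ℝ) * Real.log (p x / p x'))) ^ l / (Nat.factorial l)))
    (x y : ℝ) (hy : 0 < y) (hxy : y < x) (hpx : 0 < p x) (hpy : 0 < p y)
    (hpxy : p x ≤ p y) :
    ∫⁻ ω, ENNReal.ofReal ((1 - 1/(N:ℝ)) ^ (M y ω)) * ENNReal.ofReal ((1 - 1/(N:ℝ)) ^ (M x ω)) ∂ℙ
      = ENNReal.ofReal (p x * p y ^ (1 - 1/(N:ℝ))) := by
  have hn2 : (2:ℝ) ≤ (N:ℝ) := by exact_mod_cast hN
  have hn0 : (0:ℝ) < (N:ℝ) := by linarith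
  set t : ℝ := 1 - 1/(N:ℝ) with ht_def
  have ht0 : 0 ≤ t := by
    have h1 : 1/(N:ℝ) ≤ 1 := by rw [div_le_one hn0]; linarith
    simp only [ht_def]; linarith
  set cy : ℝ := -((N:ℝ) * Real.log (p y)) with hcy_def
  set cx : ℝ := -((N:ℝ) * Real.log (p x / p y)) with hcx_def
  have hly : Real.log (p y) ≤ 0 := Real.log_nonpos hpy.le (hp1 y)
  have hcy0 : 0 ≤ cy := by simp only [hcy_def]; nlinarith
  have hcx0 : 0 ≤ cx := by
    have hle : p x / p y ≤ 1 := by rw [div_le_one hpy]; exact hpxy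
    have := Real.log_nonpos (by positivity) hle
    simp only [hcx_def]; nlinarith
  -- measurability of the pair map
  have hMy : Measurable (M y) := hM.comp (measurable_prodMk_left)
  have hMx : Measurable (M x) := hM.comp (measurable_prodMk_left)
  set F : Ω → ℕ × ℕ := fun ω => (M y ω, M x ω) with hF_def
  have hF : Measurable F := hMy.prodMk hMx
  set ν : Measure (ℕ × ℕ) := Measure.map F ℙ with hν_def
  have : IsProbabilityMeasure ν := Measure.isProbabilityMeasure_map hF.aemeasurable
  set a : ℕ → ℝ≥0∞ := fun k => ENNReal.ofReal (Real.exp (-cy) * cy ^ k / (Nat.factorial k))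
    with ha_def
  set b : ℕ → ℝ≥0∞ := fun l => ENNReal.ofReal (Real.exp (-cx) * cx ^ l / (Nat.factorial l))
    with hb_def
  set i : ℕ × ℕ → ℕ × ℕ := fun kl => (kl.1, kl.1 + kl.2) with hi_def
  have hi : Function.Injective i := by
    rintro ⟨k, l⟩ ⟨k', l'⟩ h
    simp only [hi_def, Prod.mk.injEq] at h
    obtain ⟨h1, h2⟩ := h
    subst h1
    exact Prod.ext rfl (by omega)
  have hsingle : ∀ kl : ℕ × ℕ, ν {i kl} = a kl.1 * b kl.2 := by
    rintro ⟨k, l⟩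
    have : F ⁻¹' {((k, k + l) : ℕ × ℕ)} = {ω | M y ω = k ∧ M x ω = k + l} := by
      ext ω; simp [hF_def, Prod.ext_iff]
    rw [hν_def, Measure.map_apply hF (measurableSet_singleton _), this,
      hlaw y x hy hxy hpx k l]
    simp only [ha_def, hb_def, hcy_def, hcx_def, neg_neg]
  have hrange_sum : ∑' kl : ℕ × ℕ, ν {i kl} = 1 := by
    calc ∑' kl : ℕ × ℕ, ν {i kl} = ∑' kl : ℕ × ℕ, a kl.1 * b kl.2 := by
          exact tsum_congr hsingle
      _ = ∑' k : ℕ, ∑' l : ℕ, a k * b l := by rw [ENNReal.tsum_prod']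
      _ = (∑' k : ℕ, a k) * (∑' l : ℕ, b l) := by
          simp_rw [ENNReal.tsum_mul_left, ENNReal.tsum_mul_right]
      _ = 1 := by
          rw [ha_def, hb_def, poisson_tsum_one cy hcy0, poisson_tsum_one cx hcx0, one_mul]
  have htotal : ∑' z : ℕ × ℕ, ν {z} = 1 := by
    have h1 : ∫⁻ _ : ℕ × ℕ, 1 ∂ν = ∑' z : ℕ × ℕ, 1 * ν {z} := lintegral_countable' 1 
    simp only [one_mul, lintegral_one, measure_univ] at h1
    exact h1.symm
  have hzero : ∀ z : ℕ × ℕ, z ∉ Set.range i → ν {z} = 0 := by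
    intro z hz
    have hsub : ∑' w : (Set.range i : Set (ℕ × ℕ)), ν {(w : ℕ × ℕ)} = 1 := by
      rw [← (Equiv.ofInjective i hi).tsum_eq (fun w : (Set.range i : Set (ℕ × ℕ)) => ν {(w : ℕ × ℕ)})]
      exact hrange_sum
    have hsplit := Summable.tsum_add_tsum_compl (s := (Set.range i : Set (ℕ × ℕ)))
      (f := fun z => ν {z}) ENNReal.summable ENNReal.summable
    rw [hsub, htotal] at hsplit
    have hcompl : ∑' w : ((Set.range i : Set (ℕ × ℕ))ᶜ : Set (ℕ × ℕ)), ν {(w : ℕ × ℕ)} = 0 := by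
      have h1 : (1:ℝ≥0∞) ≠ ⊤ := ENNReal.one_ne_top
      exact (ENNReal.add_right_inj h1).mp (by rw [hsplit, add_zero])
    have := ENNReal.le_tsum (f := fun w : ((Set.range i : Set (ℕ × ℕ))ᶜ : Set (ℕ × ℕ)) => ν {(w : ℕ × ℕ)}) ⟨z, hz⟩
    rw [hcompl] at this
    exact le_antisymm this (by simp)
  set g : ℕ × ℕ → ℝ≥0∞ := fun z => ENNReal.ofReal (t ^ z.1) * ENNReal.ofReal (t ^ z.2)
    with hg_def
  have hgmeas : Measurable g := measurable_of_countable g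
  have hX : ∀ n : ℕ, ENNReal.ofReal (t ^ n) = (ENNReal.ofReal t) ^ n :=
    fun n => ENNReal.ofReal_pow ht0 n
  calc ∫⁻ ω, ENNReal.ofReal (t ^ M y ω) * ENNReal.ofReal (t ^ M x ω) ∂ℙ
      = ∫⁻ z, g z ∂ν := (lintegral_map hgmeas hF).symm
    _ = ∑' z : ℕ × ℕ, g z * ν {z} := lintegral_countable' g
    _ = ∑' kl : ℕ × ℕ, g (i kl) * ν {i kl} := by
        refine (hi.tsum_eq ?_).symm
        intro z hz
        by_contra hzr
        exact hz (by simp [hzero z hzr])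
    _ = ∑' kl : ℕ × ℕ,
          (fun k => ENNReal.ofReal (Real.exp (-cy) * cy ^ k / (Nat.factorial k) * ((t*t) ^ k))) kl.1
        * (fun l => ENNReal.ofReal (Real.exp (-cx) * cx ^ l / (Nat.factorial l) * (t ^ l))) kl.2 := by
        refine tsum_congr ?_
        rintro ⟨k, l⟩
        rw [hsingle ⟨k, l⟩]
        simp only [hg_def, hi_def, ha_def, hb_def]
        rw [ENNReal.ofReal_mul (by positivity : (0:ℝ) ≤ Real.exp (-cy) * cy ^ k / (Nat.factorial k)),
            ENNReal.ofReal_mul (by positivity : (0:ℝ) ≤ Real.exp (-cx) * cx ^ l / (Nat.factorial l)),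
            hX k, hX (k + l), ENNReal.ofReal_pow (mul_nonneg ht0 ht0), ENNReal.ofReal_mul ht0,
            hX l]
        ring
    _ = (∑' k : ℕ, ENNReal.ofReal (Real.exp (-cy) * cy ^ k / (Nat.factorial k) * ((t*t) ^ k)))
        * (∑' l : ℕ, ENNReal.ofReal (Real.exp (-cx) * cx ^ l / (Nat.factorial l) * (t ^ l))) := by
        rw [ENNReal.tsum_prod']
        simp_rw [ENNReal.tsum_mul_left, ENNReal.tsum_mul_right]
    _ = ENNReal.ofReal (Real.exp (cy * (t*t) - cy)) * ENNReal.ofReal (Real.exp (cx * t - cx)) := by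
        rw [poisson_tsum cy (t*t) hcy0 (mul_nonneg ht0 ht0), poisson_tsum cx t hcx0 ht0]
    _ = ENNReal.ofReal (p x * p y ^ t) := by
        rw [← ENNReal.ofReal_mul (Real.exp_nonneg _), ← Real.exp_add]
        congr 1
        rw [Real.rpow_def_of_pos hpy]
        rw [show p x = Real.exp (Real.log (p x)) from (Real.exp_log hpx).symm]
        rw [← Real.exp_add, Real.exp_eq_exp]
        have hlog : Real.log (p x / p y) = Real.log (p x) - Real.log (p y) :=
          Real.log_div (ne_of_gt hpx) (ne_of_gt hpy)
        have hnne : (N:ℝ) ≠ 0 := ne_of_gt hn0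
        simp only [hcy_def, hcx_def, hlog, ht_def]
        field_simp
        ring

/-- With `(M_x)` the counting process of the marked Poisson process (independent increments:
for `x' < x`, `M_{x'} ~ Poisson(-N log p_{x'})` and `M_x - M_{x'} ~ Poisson(-N log(p_x/p_{x'}))`
independent of `M_{x'}`), the variance of `m̂ = ∫_0^∞ (1-1/N)^{M_x} dx` equals
`2 ∫_0^∞ ∫_0^x p_x p_{x'}^{1-1/N} dx' dx − (E[X])²` (here `E[m̂] = E[X] = ∫_0^∞ p_x dx`). -/
theorem stmt_6 {Ω : Type*} [MeasureSpace Ω] [IsProbabilityMeasure (ℙ : Measure Ω)]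
    (p : ℝ → ℝ) (hp0 : ∀ x, 0 ≤ p x) (hp1 : ∀ x, p x ≤ 1) (hmono : Antitone p)
    (N : ℕ) (hN : 2 ≤ N)
    (M : ℝ → Ω → ℕ) (hM : Measurable (fun q : ℝ × Ω => M q.1 q.2))
    (hlaw : ∀ x' x : ℝ, 0 < x' → x' < x → 0 < p x → ∀ k l : ℕ,
      ℙ {ω | M x' ω = k ∧ M x ω = k + l} =
        ENNReal.ofReal (Real.exp ((N:ℝ) * Real.log (p x'))
            * (-((N:ℝ) * Real.log (p x'))) ^ k / (Nat.factorial k))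
        * ENNReal.ofReal (Real.exp ((N:ℝ) * Real.log (p x / p x'))
            * (-((N:ℝ) * Real.log (p x / p x'))) ^ l / (Nat.factorial l))) :
    (∫⁻ ω, (∫⁻ x in Ioi (0:ℝ),
          (if p x = 0 then 0 else ENNReal.ofReal ((1 - 1/(N:ℝ)) ^ (M x ω)))) ^ 2 ∂ℙ)
        - (∫⁻ x in Ioi (0:ℝ), ENNReal.ofReal (p x)) ^ 2
      = 2 * (∫⁻ x in Ioi (0:ℝ), ∫⁻ y in Ioo (0:ℝ) x,
            ENNReal.ofReal (p x * p y ^ (1 - 1/(N:ℝ))))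
        - (∫⁻ x in Ioi (0:ℝ), ENNReal.ofReal (p x)) ^ 2 := by
  congr 1
  have hpm : Measurable p := hmono.measurable
  set ff : ℝ → Ω → ℝ≥0∞ :=
    fun x ω => if p x = 0 then 0 else ENNReal.ofReal ((1 - 1/(N:ℝ)) ^ (M x ω)) with hff_def
  have hffmeas : Measurable (fun q : ℝ × Ω => ff q.1 q.2) := by
    simp only [hff_def]
    exact Measurable.ite ((hpm.comp measurable_fst) (measurableSet_singleton 0))
      measurable_const
      (ENNReal.measurable_ofReal.comp
        ((measurable_of_countable (fun n : ℕ => (1 - 1/(N:ℝ)) ^ n)).comp hM))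
  have hffnetop : ∀ x ω, ff x ω ≠ ⊤ := by
    intro x ω; simp only [hff_def]; split_ifs <;> simp
  have hffsec : ∀ x, Measurable (fun ω => ff x ω) :=
    fun x => hffmeas.comp measurable_prodMk_left
  have hffsec' : ∀ ω, Measurable (fun x => ff x ω) :=
    fun ω => hffmeas.comp (measurable_id.prodMk measurable_const)
  set E : ℝ → ℝ → ℝ≥0∞ := fun x y => ∫⁻ ω, ff x ω * ff y ω ∂ℙ with hE_def
  have hEmeas : Measurable (fun z : ℝ × ℝ => E z.1 z.2) := by
    have h : Measurable (fun q : (ℝ × ℝ) × Ω => ff q.1.1 q.2 * ff q.1.2 q.2) :=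
      (hffmeas.comp ((measurable_fst.fst).prodMk measurable_snd)).mul
        (hffmeas.comp ((measurable_fst.snd).prodMk measurable_snd))
    exact h.lintegral_prod_right'
  have hsymm : ∀ x y, E x y = E y x := by
    intro x y; simp only [hE_def]
    exact lintegral_congr fun ω => mul_comm _ _
  have hEval : ∀ x y : ℝ, 0 < y → y < x →
      E x y = ENNReal.ofReal (p x * p y ^ (1 - 1/(N:ℝ))) := by
    intro x y hy hxy
    by_cases hpx : p x = 0
    · have hz : ∀ ω : Ω, ff x ω * ff y ω = 0 := by
        intro ω; simp [hff_def, hpx]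
      simp only [hE_def]
      simp only [hz, lintegral_zero, hpx, zero_mul, ENNReal.ofReal_zero]
    · have hpx' : 0 < p x := lt_of_le_of_ne (hp0 x) (Ne.symm hpx)
      have hpy' : 0 < p y := lt_of_lt_of_le hpx' (hmono hxy.le)
      have hpxy' : p x ≤ p y := hmono hxy.le
      have hk := key_expect p hp1 N hN M hM hlaw x y hy hxy hpx' hpy' hpxy'
      calc E x y = ∫⁻ ω, ENNReal.ofReal ((1 - 1/(N:ℝ)) ^ (M y ω))
            * ENNReal.ofReal ((1 - 1/(N:ℝ)) ^ (M x ω)) ∂ℙ := by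
            simp only [hE_def]
            refine lintegral_congr fun ω => ?_
            rw [hff_def]
            simp only [if_neg hpx, if_neg (ne_of_gt hpy')]
            exact mul_comm _ _
        _ = ENNReal.ofReal (p x * p y ^ (1 - 1/(N:ℝ))) := hk
  -- step 1: square as double integral
  have step1 : ∀ ω, (∫⁻ x in Ioi (0:ℝ), ff x ω) ^ 2
      = ∫⁻ x in Ioi (0:ℝ), ∫⁻ y in Ioi (0:ℝ), ff x ω * ff y ω := by
    intro ω
    rw [pow_two]
    calc (∫⁻ x in Ioi (0:ℝ), ff x ω) * (∫⁻ x in Ioi (0:ℝ), ff x ω)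
        = ∫⁻ x in Ioi (0:ℝ), ff x ω * ∫⁻ y in Ioi (0:ℝ), ff y ω :=
          (lintegral_mul_const'' _ ((hffsec' ω).aemeasurable)).symm
      _ = ∫⁻ x in Ioi (0:ℝ), ∫⁻ y in Ioi (0:ℝ), ff x ω * ff y ω :=
          lintegral_congr fun x => (lintegral_const_mul' _ _ (hffnetop x ω)).symm
  set μ1 : Measure ℝ := volume.restrict (Ioi (0:ℝ)) with hμ1_def
  set μ2 : Measure (ℝ × ℝ) := μ1.prod μ1 with hμ2_def
  have hswap1 : Measurable (Function.uncurry fun ω x => ∫⁻ y in Ioi (0:ℝ), ff x ω * ff y ω) := by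
    have h : Measurable (fun r : (Ω × ℝ) × ℝ => ff r.1.2 r.1.1 * ff r.2 r.1.1) :=
      (hffmeas.comp ((measurable_fst.snd).prodMk measurable_fst.fst)).mul
        (hffmeas.comp (measurable_snd.prodMk measurable_fst.fst))
    exact h.lintegral_prod_right'
  set L : Set (ℝ × ℝ) := {z : ℝ × ℝ | z.2 < z.1} with hL_def
  set U : Set (ℝ × ℝ) := {z : ℝ × ℝ | z.1 < z.2} with hU_def
  have hLm : MeasurableSet L := measurableSet_lt measurable_snd measurable_fst
  have hUm : MeasurableSet U := measurableSet_lt measurable_fst measurable_snd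
  have hdiag : μ2 {z : ℝ × ℝ | z.1 = z.2} = 0 := by
    have hm : MeasurableSet {z : ℝ × ℝ | z.1 = z.2} :=
      measurableSet_eq_fun measurable_fst measurable_snd
    rw [hμ2_def, Measure.prod_apply hm]
    have hfib : ∀ x : ℝ, (Prod.mk x ⁻¹' {z : ℝ × ℝ | z.1 = z.2}) = {x} := by
      intro x; ext y; simp [eq_comm]
    have h0 : ∀ x : ℝ, μ1 {x} = 0 := by
      intro x
      rw [hμ1_def, Measure.restrict_apply (measurableSet_singleton x)]
      exact measure_mono_null inter_subset_left (measure_singleton x)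
    simp only [hfib, h0, lintegral_zero]
  have hcompl : (Lᶜ : Set (ℝ × ℝ)) =ᵐ[μ2] (U : Set (ℝ × ℝ)) := by
    have h1 : Lᶜ \ U ⊆ {z : ℝ × ℝ | z.1 = z.2} := by
      rintro ⟨x, y⟩ ⟨h1, h2⟩
      simp only [hL_def, hU_def, mem_compl_iff, mem_setOf_eq, not_lt] at h1 h2 ⊢
      linarith
    have h2 : U \ Lᶜ = ∅ := by
      rw [Set.eq_empty_iff_forall_notMem]
      rintro z ⟨hz1, hz2⟩
      rw [mem_compl_iff, not_not] at hz2
      exact absurd (lt_trans (show z.1 < z.2 from hz1) (show z.2 < z.1 from hz2)) (lt_irrefl _)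
    refine (MeasureTheory.ae_eq_set.mpr ⟨measure_mono_null h1 hdiag, by rw [h2]; exact measure_empty⟩)
  calc ∫⁻ ω, (∫⁻ x in Ioi (0:ℝ), ff x ω) ^ 2 ∂ℙ
      = ∫⁻ ω, ∫⁻ x in Ioi (0:ℝ), ∫⁻ y in Ioi (0:ℝ), ff x ω * ff y ω ∂ℙ :=
        lintegral_congr step1
    _ = ∫⁻ x in Ioi (0:ℝ), ∫⁻ ω, ∫⁻ y in Ioi (0:ℝ), ff x ω * ff y ω ∂ℙ :=
        lintegral_lintegral_swap hswap1.aemeasurable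
    _ = ∫⁻ x in Ioi (0:ℝ), ∫⁻ y in Ioi (0:ℝ), E x y := by
        refine lintegral_congr fun x => ?_
        have h : Measurable (Function.uncurry fun ω y => ff x ω * ff y ω) :=
          ((hffsec x).comp measurable_fst).mul
            (hffmeas.comp (measurable_snd.prodMk measurable_fst))
        exact lintegral_lintegral_swap h.aemeasurable
    _ = ∫⁻ z, E z.1 z.2 ∂μ2 := (lintegral_prod _ hEmeas.aemeasurable).symm
    _ = (∫⁻ z in L, E z.1 z.2 ∂μ2) + ∫⁻ z in Lᶜ, E z.1 z.2 ∂μ2 :=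
        (lintegral_add_compl _ hLm).symm
    _ = (∫⁻ z in L, E z.1 z.2 ∂μ2) + ∫⁻ z in U, E z.1 z.2 ∂μ2 := by
        rw [setLIntegral_congr hcompl]
    _ = (∫⁻ z in L, E z.1 z.2 ∂μ2) + ∫⁻ z in L, E z.1 z.2 ∂μ2 := by
        congr 1
        calc ∫⁻ z in U, E z.1 z.2 ∂μ2
            = ∫⁻ z, U.indicator (fun z : ℝ × ℝ => E z.1 z.2) z ∂μ2 :=
              (lintegral_indicator hUm _).symm
          _ = ∫⁻ z, U.indicator (fun z : ℝ × ℝ => E z.1 z.2) (Prod.swap z) ∂μ2 := by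
              conv_lhs => rw [show μ2 = Measure.map Prod.swap μ2 from
                (Measure.prod_swap (μ := μ1) (ν := μ1)).symm]
              rw [lintegral_map (hEmeas.indicator hUm) measurable_swap]
          _ = ∫⁻ z, L.indicator (fun z : ℝ × ℝ => E z.2 z.1) z ∂μ2 := by
              refine lintegral_congr fun z => ?_
              by_cases hz : z ∈ L
              · rw [indicator_of_mem (show Prod.swap z ∈ U from hz), indicator_of_mem hz]
                rfl
              · rw [indicator_of_notMem (show Prod.swap z ∉ U from hz),
                  indicator_of_notMem hz]
          _ = ∫⁻ z in L, E z.2 z.1 ∂μ2 := lintegral_indicator hLm _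
          _ = ∫⁻ z in L, E z.1 z.2 ∂μ2 := lintegral_congr fun z => hsymm z.2 z.1
    _ = 2 * ∫⁻ z in L, E z.1 z.2 ∂μ2 := (two_mul _).symm
    _ = 2 * ∫⁻ x in Ioi (0:ℝ), ∫⁻ y in Ioo (0:ℝ) x, E x y := by
        congr 1
        calc ∫⁻ z in L, E z.1 z.2 ∂μ2
            = ∫⁻ z, L.indicator (fun z : ℝ × ℝ => E z.1 z.2) z ∂μ2 :=
              (lintegral_indicator hLm _).symm
          _ = ∫⁻ x, ∫⁻ y, L.indicator (fun z : ℝ × ℝ => E z.1 z.2) (x, y) ∂μ1 ∂μ1 :=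
              lintegral_prod _ ((hEmeas.indicator hLm).aemeasurable)
          _ = ∫⁻ x in Ioi (0:ℝ), ∫⁻ y in Ioo (0:ℝ) x, E x y := by
              refine lintegral_congr fun x => ?_
              have hind : ∀ y : ℝ, L.indicator (fun z : ℝ × ℝ => E z.1 z.2) (x, y)
                  = (Iio x).indicator (fun y => E x y) y := by
                intro y
                by_cases hy : y < x
                · rw [indicator_of_mem (show ((x, y) : ℝ × ℝ) ∈ L from hy),
                    indicator_of_mem (show y ∈ Iio x from hy)]
                · rw [indicator_of_notMem (show ((x, y) : ℝ × ℝ) ∉ L from hy),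
                    indicator_of_notMem (show y ∉ Iio x from hy)]
              calc ∫⁻ y, L.indicator (fun z : ℝ × ℝ => E z.1 z.2) (x, y) ∂μ1
                  = ∫⁻ y, (Iio x).indicator (fun y => E x y) y ∂μ1 := lintegral_congr hind
                _ = ∫⁻ y in Iio x, E x y ∂μ1 := lintegral_indicator measurableSet_Iio _
                _ = ∫⁻ y in Ioo (0:ℝ) x, E x y := by
                    rw [hμ1_def, Measure.restrict_restrict measurableSet_Iio,
                      Set.Iio_inter_Ioi]
    _ = 2 * ∫⁻ x in Ioi (0:ℝ), ∫⁻ y in Ioo (0:ℝ) x,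
          ENNReal.ofReal (p x * p y ^ (1 - 1/(N:ℝ))) := by
        congr 1
        refine lintegral_congr fun x => ?_
        refine setLIntegral_congr_fun measurableSet_Ioo (fun y hy => ?_)
        exact hEval x y hy.1 hy.2
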